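/- For every real θ with sin θ · cos θ ≠ 0 and cos(2θ) ≠ 0, the 4×4 Hermitian matrix B₂(θ) := sec(2θ)·[[cos²θ, 0, 0, cos²θ],[0, −sin²θ, −sin²θ, 0],[0, −sin²θ, −sin²θ, 0],[cos²θ, 0, 0, cos²θ]] is not positive semidefinite; hence the intermediate dynamical map corresponding to the second application of CNOT is not completely positive. -/

import Mathlib

open Matrix Complex
open scoped ComplexOrder

/-- The dynamical (Choi) matrix B₂(θ) of the intermediate map corresponding to the second
application of the CNOT gate. -/
noncomputable def B2 (θ : ℝ) : Matrix (Fin 4) (Fin 4) ℂ :=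
  ((1 / Real.cos (2 * θ) : ℝ) : ℂ) •
    !![(Real.cos θ ^ 2 : ℂ), 0, 0, (Real.cos θ ^ 2 : ℂ);
       0, -(Real.sin θ ^ 2 : ℂ), -(Real.sin θ ^ 2 : ℂ), 0;
       0, -(Real.sin θ ^ 2 : ℂ), -(Real.sin θ ^ 2 : ℂ), 0;
       (Real.cos θ ^ 2 : ℂ), 0, 0, (Real.cos θ ^ 2 : ℂ)]

/-- For sin θ · cos θ ≠ 0 and cos(2θ) ≠ 0, B₂(θ) is not positive semidefinite; hence the
intermediate dynamical map of the second application of CNOT is not completely positive. -/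
theorem B2_not_posSemidef (θ : ℝ) (h₁ : Real.sin θ * Real.cos θ ≠ 0)
    (h₂ : Real.cos (2 * θ) ≠ 0) : ¬ (B2 θ).PosSemidef := by
  intro hps
  have hd : ∀ i : Fin 4, 0 ≤ (B2 θ) i i := fun i => by
    exact hps.diag_nonneg
  have h00 := hd 0
  have h11 := hd 1
  have e00 : (B2 θ) 0 0 = ((Real.cos θ ^ 2 / Real.cos (2 * θ) : ℝ) : ℂ) := by
    simp [B2, div_eq_inv_mul]
  have e11 : (B2 θ) 1 1 = ((-(Real.sin θ ^ 2) / Real.cos (2 * θ) : ℝ) : ℂ) := by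
    simp [B2, div_eq_inv_mul]
  rw [e00] at h00
  rw [e11] at h11
  rw [Complex.zero_le_real] at h00 h11
  have hs : Real.sin θ ≠ 0 := fun h => h₁ (by simp [h])
  have hc : Real.cos θ ≠ 0 := fun h => h₁ (by simp [h])
  have hs2 : 0 < Real.sin θ ^ 2 := by positivity
  have hc2 : 0 < Real.cos θ ^ 2 := by positivity
  rcases h₂.lt_or_gt with h | h
  · have := div_neg_of_pos_of_neg hc2 h
    linarith
  · have := div_neg_of_neg_of_pos (neg_neg_of_pos hs2) h
    linarith
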